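/- arXiv:1804.10948 — 2 statements merged into one kernel-verified Lean document; each statement's English description precedes it below -/
import Mathlib

section
/- Let h ≥ 1, α > 0 and κ_h ∈ ℝ, let β_h = α/(1+κ_h), and let A > 0. Define h(u,v) = β_h·log₊(u·|v|) − 1_{u|v|>1} − α·log₊(u) + 1_{u>1} for u > 0, v ∈ ℝ. Then for W ∈ ℝ with A = |W|^{β_h}, the change of variables t = s^{−α} gives ∫_{1 ∧ |W|^{−1/(1+κ_h)}}^{∞} h(s, s^{κ_h}|W|)² α s^{−α−1} ds = |A − 1|. -/
open MeasureTheory Real Set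

noncomputable def logPlus (x : ℝ) : ℝ := max (Real.log x) 0

lemma myContOn (α L : ℝ) (S : Set ℝ) (hS : ∀ x ∈ S, (0:ℝ) < x) :
    ContinuousOn (fun s : ℝ => (L + α * Real.log s - 1)^2 * (α * s ^ (-α-1))) S := by
  intro x hx
  have hx0 : 0 < x := hS x hx
  have hca : ContinuousAt (fun s : ℝ => (L + α * Real.log s - 1)^2 * (α * s ^ (-α-1))) x :=
    (((((Real.continuousAt_log hx0.ne').const_mul α).const_add L).sub
      continuousAt_const).pow 2).mul
      ((Real.continuousAt_rpow_const x (-α-1) (Or.inl hx0.ne')).const_mul α)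
  exact hca.continuousWithinAt

lemma keyInt (α L a b : ℝ) (hα : 0 < α) (ha : 0 < a) (hab : a ≤ b) :
    ∫ s in a..b, (L + α * Real.log s - 1)^2 * (α * s ^ (-α-1)) =
      a ^ (-α) * ((L + α * Real.log a)^2 + 1) - b ^ (-α) * ((L + α * Real.log b)^2 + 1) := by
  have hF : ∀ s ∈ Set.uIcc a b,
      HasDerivAt (fun s : ℝ => -(s ^ (-α) * ((L + α * Real.log s)^2 + 1)))
        ((L + α * Real.log s - 1)^2 * (α * s ^ (-α-1))) s := by
    intro s hs
    rw [Set.uIcc_of_le hab] at hs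
    have hs0 : 0 < s := lt_of_lt_of_le ha hs.1
    have h1 : HasDerivAt (fun s : ℝ => s ^ (-α)) (-α * s ^ (-α - 1)) s :=
      Real.hasDerivAt_rpow_const (Or.inl hs0.ne')
    have h2 : HasDerivAt (fun s : ℝ => (L + α * Real.log s)^2 + 1)
        ((2 : ℕ) * (L + α * Real.log s) ^ 1 * (α * s⁻¹)) s :=
      ((((Real.hasDerivAt_log hs0.ne').const_mul α).const_add L).pow 2).add_const 1
    have h3 := (h1.mul h2).neg
    convert h3 using 1
    case e'_4 => rfl
    case e'_5 => rfl
    case e'_8 => rfl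
    have hsp : s ^ (-α) = s ^ (-α-1) * s := by
      rw [← Real.rpow_add_one hs0.ne']; ring_nf
    rw [hsp]
    field_simp
    ring
  have hint : IntervalIntegrable
      (fun s : ℝ => (L + α * Real.log s - 1)^2 * (α * s ^ (-α-1))) volume a b := by
    apply (myContOn α L (Set.uIcc a b) ?_).intervalIntegrable
    intro x hx
    rw [Set.uIcc_of_le hab] at hx
    exact lt_of_lt_of_le ha hx.1
  rw [intervalIntegral.integral_eq_sub_of_hasDerivAt hF hint]
  ring

lemma tailInt (α K b : ℝ) (hα : 0 < α) (hb : 0 < b) :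
    ∫ s in Set.Ioi b, K * (α * s ^ (-α - 1)) = K * b ^ (-α) := by
  have : ∀ s : ℝ, K * (α * s ^ (-α-1)) = (K * α) * s ^ (-α-1) := fun s => by ring
  simp_rw [this]
  rw [MeasureTheory.integral_const_mul, integral_Ioi_rpow_of_lt (by linarith) hb]
  have h1 : -α - 1 + 1 = -α := by ring
  rw [h1]
  field_simp

lemma tailIntegrable (α K b : ℝ) (hα : 0 < α) (hb : 0 < b) :
    IntegrableOn (fun s : ℝ => K * (α * s ^ (-α - 1))) (Set.Ioi b) := by
  have h : IntegrableOn (fun s : ℝ => (K * α) * s ^ (-α-1)) (Set.Ioi b) :=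
    (integrableOn_Ioi_rpow_of_lt (a := -α-1) (by linarith) hb).const_mul (K * α)
  exact MeasureTheory.IntegrableOn.congr_fun h (fun s _ => by ring) measurableSet_Ioi

/-- variance computation for the scaling exponent estimator. -/
theorem stmt0 (hlag : ℕ) (hhlag : 1 ≤ hlag) (α κ : ℝ) (hα : 0 < α) (hκ : 0 < 1 + κ)
    (β : ℝ) (hβ : β = α / (1 + κ)) (W : ℝ) (A : ℝ) (hA : A = |W| ^ β) (hA0 : 0 < A)
    (hfun : ℝ → ℝ → ℝ)
    (hdef : ∀ u v : ℝ, hfun u v =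
      β * logPlus (u * |v|) - (if 1 < u * |v| then (1:ℝ) else 0)
        - α * logPlus u + (if 1 < u then (1:ℝ) else 0)) :
    ∫ s in Set.Ioi (min 1 (|W| ^ (-(1 / (1 + κ))))),
      (hfun s (s ^ κ * |W|)) ^ 2 * (α * s ^ (-α - 1)) = |A - 1| := by
  have hβ0 : 0 < β := by rw [hβ]; positivity
  have hW0 : W ≠ 0 := by
    intro h
    rw [h, abs_zero, Real.zero_rpow hβ0.ne'] at hA
    exact hA0.ne' hA
  have hW : 0 < |W| := abs_pos.mpr hW0
  have hβκ : β * (1 + κ) = α := by rw [hβ]; field_simp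
  have hlogA : Real.log A = β * Real.log |W| := by rw [hA, Real.log_rpow hW]
  set c : ℝ := |W| ^ (-(1 / (1 + κ))) with hc
  have hc0 : 0 < c := Real.rpow_pos_of_pos hW _
  have hcα : c ^ (-α) = A := by
    rw [hc, ← Real.rpow_mul hW.le, hA, hβ]
    congr 1
    field_simp
  have hlogc : α * Real.log c = -Real.log A := by
    rw [hc, Real.log_rpow hW, hlogA, hβ]
    field_simp
  -- the critical threshold
  have hcrit : ∀ s : ℝ, 0 < s → (1 < s ^ (1 + κ) * |W| ↔ c < s) := by
    intro s hs
    have hcκ : c ^ (1 + κ) = |W|⁻¹ := by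
      rw [hc, ← Real.rpow_mul hW.le]
      have : -(1 / (1 + κ)) * (1 + κ) = -1 := by field_simp
      rw [this, Real.rpow_neg_one]
    rw [show (1 < s ^ (1 + κ) * |W| ↔ |W|⁻¹ < s ^ (1 + κ)) from by
        rw [inv_eq_one_div, div_lt_iff₀ hW],
      ← hcκ, Real.rpow_lt_rpow_iff hc0.le hs.le hκ]
  have habs : ∀ s : ℝ, 0 < s → s * abs (s ^ κ * |W|) = s ^ (1 + κ) * |W| := by
    intro s hs
    rw [abs_mul, abs_of_pos (Real.rpow_pos_of_pos hs κ), abs_abs,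
      Real.rpow_add hs, Real.rpow_one]
    ring
  -- evaluation of hfun on the three regions
  have evalHigh : ∀ s : ℝ, c < s → 1 < s → hfun s (s ^ κ * |W|) = Real.log A := by
    intro s hcs h1s
    have hs0 : 0 < s := lt_trans one_pos h1s
    have hgt : 1 < s ^ (1 + κ) * |W| := (hcrit s hs0).mpr hcs
    rw [hdef, habs s hs0, if_pos hgt, if_pos h1s]
    unfold logPlus
    rw [max_eq_left (Real.log_nonneg hgt.le), max_eq_left (Real.log_nonneg h1s.le),
      Real.log_mul (by positivity) hW.ne', Real.log_rpow hs0, hlogA]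
    linear_combination Real.log s * hβκ
  have evalMid1 : ∀ s : ℝ, c < s → s ≤ 1 →
      hfun s (s ^ κ * |W|) = Real.log A + α * Real.log s - 1 := by
    intro s hcs hs1
    have hs0 : 0 < s := lt_trans hc0 hcs
    have hgt : 1 < s ^ (1 + κ) * |W| := (hcrit s hs0).mpr hcs
    rw [hdef, habs s hs0, if_pos hgt, if_neg (not_lt.mpr hs1)]
    unfold logPlus
    rw [max_eq_left (Real.log_nonneg hgt.le), max_eq_right (Real.log_nonpos hs0.le hs1),
      Real.log_mul (by positivity) hW.ne', Real.log_rpow hs0, hlogA]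
    linear_combination Real.log s * hβκ
  have evalMid2 : ∀ s : ℝ, 1 < s → s ≤ c →
      hfun s (s ^ κ * |W|) = 1 - α * Real.log s := by
    intro s h1s hsc
    have hs0 : 0 < s := lt_trans one_pos h1s
    have hle : ¬ (1 < s ^ (1 + κ) * |W|) := by
      rw [hcrit s hs0]; exact not_lt.mpr hsc
    rw [hdef, habs s hs0, if_neg hle, if_pos h1s]
    unfold logPlus
    rw [max_eq_right (Real.log_nonpos (by positivity) (not_lt.mp hle)),
      max_eq_left (Real.log_nonneg h1s.le)]
    ring
  rcases le_total 1 |W| with hWc | hWc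
  · -- |W| ≥ 1 : c ≤ 1, A ≥ 1
    have hcle1 : c ≤ 1 :=
      Real.rpow_le_one_of_one_le_of_nonpos hWc (neg_nonpos.mpr (by positivity))
    have hA1 : 1 ≤ A := by rw [hA]; exact Real.one_le_rpow hWc hβ0.le
    rw [min_eq_right hcle1]
    rw [← Set.Ioc_union_Ioi_eq_Ioi hcle1]
    have heq1 : Set.EqOn (fun s : ℝ => (hfun s (s ^ κ * |W|)) ^ 2 * (α * s ^ (-α - 1)))
        (fun s : ℝ => (Real.log A + α * Real.log s - 1)^2 * (α * s ^ (-α-1)))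
        (Set.Ioc c 1) := by
      intro s hs
      simp only
      rw [evalMid1 s hs.1 hs.2]
    have heq2 : Set.EqOn (fun s : ℝ => (hfun s (s ^ κ * |W|)) ^ 2 * (α * s ^ (-α - 1)))
        (fun s : ℝ => (Real.log A)^2 * (α * s ^ (-α - 1))) (Set.Ioi 1) := by
      intro s hs
      simp only
      rw [evalHigh s (lt_of_le_of_lt hcle1 hs) hs]
    have hint1 : IntegrableOn (fun s : ℝ => (hfun s (s ^ κ * |W|)) ^ 2 * (α * s ^ (-α - 1)))
        (Set.Ioc c 1) := by
      apply IntegrableOn.congr_fun ?_ heq1.symm measurableSet_Ioc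
      apply ((myContOn α (Real.log A) (Set.Icc c 1)
        (fun x hx => lt_of_lt_of_le hc0 hx.1)).integrableOn_Icc).mono_set Set.Ioc_subset_Icc_self
    have hint2 : IntegrableOn (fun s : ℝ => (hfun s (s ^ κ * |W|)) ^ 2 * (α * s ^ (-α - 1)))
        (Set.Ioi 1) :=
      IntegrableOn.congr_fun (tailIntegrable α ((Real.log A)^2) 1 hα one_pos)
        heq2.symm measurableSet_Ioi
    rw [MeasureTheory.setIntegral_union (Set.Ioc_disjoint_Ioi le_rfl) measurableSet_Ioi
      hint1 hint2]
    rw [MeasureTheory.setIntegral_congr_fun measurableSet_Ioc heq1,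
      MeasureTheory.setIntegral_congr_fun measurableSet_Ioi heq2,
      ← intervalIntegral.integral_of_le hcle1,
      keyInt α (Real.log A) c 1 hα hc0 hcle1, tailInt α ((Real.log A)^2) 1 hα one_pos]
    rw [hcα, hlogc, Real.one_rpow, Real.log_one, abs_of_nonneg (by linarith)]
    ring
  · -- |W| ≤ 1 : 1 ≤ c, A ≤ 1
    have h1lec : 1 ≤ c :=
      Real.one_le_rpow_of_pos_of_le_one_of_nonpos hW hWc (neg_nonpos.mpr (by positivity))
    have hA1 : A ≤ 1 := by
      rw [hA]; exact Real.rpow_le_one (abs_nonneg W) hWc hβ0.le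
    rw [min_eq_left h1lec]
    rw [← Set.Ioc_union_Ioi_eq_Ioi h1lec]
    have heq1 : Set.EqOn (fun s : ℝ => (hfun s (s ^ κ * |W|)) ^ 2 * (α * s ^ (-α - 1)))
        (fun s : ℝ => ((0:ℝ) + α * Real.log s - 1)^2 * (α * s ^ (-α-1)))
        (Set.Ioc 1 c) := by
      intro s hs
      simp only
      rw [evalMid2 s hs.1 hs.2]
      ring_nf
    have heq2 : Set.EqOn (fun s : ℝ => (hfun s (s ^ κ * |W|)) ^ 2 * (α * s ^ (-α - 1)))
        (fun s : ℝ => (Real.log A)^2 * (α * s ^ (-α - 1))) (Set.Ioi c) := by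
      intro s hs
      simp only
      rw [evalHigh s hs (lt_of_le_of_lt h1lec hs)]
    have hint1 : IntegrableOn (fun s : ℝ => (hfun s (s ^ κ * |W|)) ^ 2 * (α * s ^ (-α - 1)))
        (Set.Ioc 1 c) := by
      apply IntegrableOn.congr_fun ?_ heq1.symm measurableSet_Ioc
      apply ((myContOn α 0 (Set.Icc 1 c)
        (fun x hx => lt_of_lt_of_le one_pos hx.1)).integrableOn_Icc).mono_set
        Set.Ioc_subset_Icc_self
    have hint2 : IntegrableOn (fun s : ℝ => (hfun s (s ^ κ * |W|)) ^ 2 * (α * s ^ (-α - 1)))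
        (Set.Ioi c) :=
      IntegrableOn.congr_fun (tailIntegrable α ((Real.log A)^2) c hα hc0)
        heq2.symm measurableSet_Ioi
    rw [MeasureTheory.setIntegral_union (Set.Ioc_disjoint_Ioi le_rfl) measurableSet_Ioi
      hint1 hint2]
    rw [MeasureTheory.setIntegral_congr_fun measurableSet_Ioc heq1,
      MeasureTheory.setIntegral_congr_fun measurableSet_Ioi heq2,
      ← intervalIntegral.integral_of_le h1lec,
      keyInt α 0 1 c hα one_pos h1lec, tailInt α ((Real.log A)^2) c hα hc0]
    rw [hcα, Real.one_rpow, Real.log_one, abs_of_nonpos (by linarith)]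
    have hz : (0:ℝ) + α * Real.log c = α * Real.log c := by ring
    rw [hz, hlogc]
    ring
end

section
/- Let F̄ be regularly varying at infinity with index −α < 0 and let b be regularly varying with index κ ≥ 0. Suppose for all y > 0, lim_{x→∞} P(|X_0 X_h| > x b(x) y)/F̄(x) = c·y^{−α/(1+κ)} for a constant c > 0 (as in eq:tail-scaling-exponent). Then the function x ↦ P(|X_0X_h| > x) is regularly varying at infinity with index −α/(1+κ). -/
open MeasureTheory Filter

/-- `g` is regularly varying at infinity with index `ρ`. -/
def RegVarying (g : ℝ → ℝ) (ρ : ℝ) : Prop :=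
  ∀ t : ℝ, 0 < t → Tendsto (fun x => g (t * x) / g x) atTop (nhds (t ^ ρ))

/-- Auxiliary sandwich lemma: for any `t > 0`, `M' > 1` and `ε' > 0`, every large `u`
can be sandwiched as `v ≤ u ≤ v * M'` where `v = x * b x` for some large `x`, with
quantitative bounds on `G` at the points `v * t`, `v * M'`, `v * (t * M')` and `v`. -/
lemma helper16 (b Fbar G : ℝ → ℝ) (c ρ κ : ℝ) (hκ : 0 ≤ κ)
    (hbrv : ∀ s : ℝ, 0 < s → Tendsto (fun x => b (s * x) / b x) atTop (nhds (s ^ κ)))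
    (hbpos : ∀ᶠ x in atTop, 0 < b x) (hFpos : ∀ᶠ x in atTop, 0 < Fbar x)
    (hlim : ∀ y : ℝ, 0 < y →
      Tendsto (fun x => G (x * b x * y) / Fbar x) atTop (nhds (c * y ^ ρ)))
    (t M' ε' : ℝ) (ht : 0 < t) (hM : 1 < M') (hε : 0 < ε') :
    ∀ᶠ u in atTop, ∃ v F : ℝ, 0 < F ∧ 0 < v ∧ v ≤ u ∧ u ≤ v * M' ∧
      G (v * t) < (c * t ^ ρ + ε') * F ∧
      (c * M' ^ ρ - ε') * F < G (v * M') ∧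
      (c * (t * M') ^ ρ - ε') * F < G (v * (t * M')) ∧
      G v < (c + ε') * F := by
  have hκ1 : (0:ℝ) < 1 + κ := by linarith
  have hMpos : (0:ℝ) < M' := lt_trans one_pos hM
  set l : ℝ := M' ^ ((1 + κ)⁻¹ / 2) with hl_def
  have hl1 : 1 < l := by
    rw [hl_def, Real.one_lt_rpow_iff_of_pos hMpos]
    exact Or.inl ⟨hM, by positivity⟩
  have hl0 : (0:ℝ) < l := lt_trans one_pos hl1
  have hlM : l ^ (1 + κ) < M' := by
    have heq : l ^ (1 + κ) = M' ^ ((1:ℝ)/2) := by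
      rw [hl_def, ← Real.rpow_mul hMpos.le]
      congr 1
      field_simp
    rw [heq]
    calc M' ^ ((1:ℝ)/2) < M' ^ (1:ℝ) :=
          Real.rpow_lt_rpow_of_exponent_lt hM (by norm_num)
      _ = M' := Real.rpow_one _
  -- ratio convergence for h(x) = x * b x
  have hr1 : Tendsto (fun x : ℝ => (l * x * b (l * x)) / (x * b x)) atTop
      (nhds (l ^ (1 + κ))) := by
    have h1 : Tendsto (fun x : ℝ => l * (b (l * x) / b x)) atTop (nhds (l * l ^ κ)) :=
      (hbrv l hl0).const_mul l
    have heq : ∀ᶠ x : ℝ in atTop, l * (b (l * x) / b x) = (l * x * b (l * x)) / (x * b x) := by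
      filter_upwards [eventually_gt_atTop 0, hbpos] with x hx hbx
      field_simp
    have h2 := h1.congr' heq
    have hll : l * l ^ κ = l ^ (1 + κ) := by
      rw [Real.rpow_add hl0, Real.rpow_one]
    rwa [hll] at h2
  set A : ℕ → ℝ := fun n => l ^ n * b (l ^ n) with hA_def
  have hpow : Tendsto (fun n : ℕ => (l : ℝ) ^ n) atTop atTop :=
    tendsto_pow_atTop_atTop_of_one_lt hl1
  have hrA : Tendsto (fun n : ℕ => A (n + 1) / A n) atTop (nhds (l ^ (1 + κ))) := by
    have h := hr1.comp hpow
    refine h.congr fun n => ?_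
    simp only [Function.comp, hA_def]
    rw [pow_succ, mul_comm ((l:ℝ) ^ n) l]
  have hl1κ : 1 < l ^ (1 + κ) := by
    rw [Real.one_lt_rpow_iff_of_pos hl0]
    exact Or.inl ⟨hl1, hκ1⟩
  set r : ℝ := (1 + l ^ (1 + κ)) / 2 with hr_def
  have hr_gt1 : 1 < r := by rw [hr_def]; linarith
  have hr_lt : r < l ^ (1 + κ) := by rw [hr_def]; linarith
  -- eventual facts in n
  have e1 : ∀ᶠ n in atTop, r < A (n + 1) / A n := hrA.eventually (eventually_gt_nhds hr_lt)
  have e2 : ∀ᶠ n in atTop, A (n + 1) / A n < M' := hrA.eventually (eventually_lt_nhds hlM)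
  have e3 : ∀ᶠ n : ℕ in atTop, 0 < b ((l:ℝ) ^ n) := hpow.eventually hbpos
  have e4 : ∀ᶠ n : ℕ in atTop, 0 < Fbar ((l:ℝ) ^ n) := hpow.eventually hFpos
  have e5 : ∀ᶠ n : ℕ in atTop, G (A n * t) / Fbar ((l:ℝ) ^ n) < c * t ^ ρ + ε' :=
    ((hlim t ht).comp hpow).eventually (eventually_lt_nhds (by linarith))
  have e6 : ∀ᶠ n : ℕ in atTop, c * M' ^ ρ - ε' < G (A n * M') / Fbar ((l:ℝ) ^ n) :=
    ((hlim M' hMpos).comp hpow).eventually (eventually_gt_nhds (by linarith))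
  have e7 : ∀ᶠ n : ℕ in atTop,
      c * (t * M') ^ ρ - ε' < G (A n * (t * M')) / Fbar ((l:ℝ) ^ n) :=
    ((hlim (t * M') (by positivity)).comp hpow).eventually (eventually_gt_nhds (by linarith))
  have e8 : ∀ᶠ n : ℕ in atTop, G (A n) / Fbar ((l:ℝ) ^ n) < c + ε' := by
    have h := ((hlim 1 one_pos).comp hpow).eventually
      (eventually_lt_nhds (show c * (1:ℝ) ^ ρ < c * 1 ^ ρ + ε' by linarith))
    simpa [Real.one_rpow] using h
  obtain ⟨N, hN⟩ := eventually_atTop.mp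
    (e1.and (e2.and (e3.and (e4.and (e5.and (e6.and (e7.and e8)))))))
  have hApos : ∀ n, N ≤ n → 0 < A n := fun n hn =>
    mul_pos (pow_pos hl0 n) (hN n hn).2.2.1
  have hstep : ∀ n, N ≤ n → r * A n < A (n + 1) := fun n hn =>
    (lt_div_iff₀ (hApos n hn)).mp (hN n hn).1
  have hstepM : ∀ n, N ≤ n → A (n + 1) < A n * M' := fun n hn => by
    have := (div_lt_iff₀ (hApos n hn)).mp (hN n hn).2.1
    linarith [this]
  have hr0 : (0:ℝ) < r := lt_trans one_pos hr_gt1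
  have hgrow : ∀ k : ℕ, A N * r ^ k ≤ A (N + k) := by
    intro k
    induction k with
    | zero => simp
    | succ k ih =>
      have h1 : A N * r ^ (k + 1) = (A N * r ^ k) * r := by ring
      have h2 : (A N * r ^ k) * r ≤ A (N + k) * r :=
        mul_le_mul_of_nonneg_right ih hr0.le
      have h3 : A (N + k) * r < A (N + k + 1) := by
        have := hstep (N + k) (Nat.le_add_right _ _)
        linarith
      calc A N * r ^ (k + 1) = (A N * r ^ k) * r := h1
        _ ≤ A (N + k) * r := h2
        _ ≤ A (N + (k + 1)) := by
            have hnk : N + k + 1 = N + (k + 1) := by omega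
            rw [← hnk]; exact h3.le
  have hANpos : 0 < A N := hApos N le_rfl
  filter_upwards [eventually_ge_atTop (A N)] with u hu
  have hex : ∃ k, u < A (N + k) := by
    obtain ⟨k, hk⟩ := pow_unbounded_of_one_lt (u / A N) hr_gt1
    refine ⟨k, lt_of_lt_of_le ?_ (hgrow k)⟩
    rw [mul_comm]
    exact (div_lt_iff₀ hANpos).mp hk
  have hk0pos : 0 < Nat.find hex := by
    rcases Nat.eq_zero_or_pos (Nat.find hex) with h | h
    · exfalso
      have hs := Nat.find_spec hex
      rw [h] at hs
      simp only [Nat.add_zero] at hs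
      linarith
    · exact h
  set n := N + (Nat.find hex - 1) with hn_def
  have hn_ge : N ≤ n := Nat.le_add_right _ _
  have hAn_le : A n ≤ u := by
    have h := Nat.find_min hex (show Nat.find hex - 1 < Nat.find hex from
      Nat.sub_lt hk0pos one_pos)
    push_neg at h
    exact h
  have hn1 : n + 1 = N + Nat.find hex := by omega
  have hu_lt : u < A (n + 1) := by rw [hn1]; exact Nat.find_spec hex
  have hu_le : u ≤ A n * M' := (lt_of_lt_of_le hu_lt (hstepM n hn_ge).le).le
  obtain ⟨_, _, _, hF, h5, h6, h7, h8⟩ := hN n hn_ge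
  exact ⟨A n, Fbar ((l:ℝ) ^ n), hF, hApos n hn_ge, hAn_le, hu_le,
    (div_lt_iff₀ hF).mp h5, (lt_div_iff₀ hF).mp h6, (lt_div_iff₀ hF).mp h7,
    (div_lt_iff₀ hF).mp h8⟩

/-- if `P(|X₀X_h| > x b(x) y)/F̄(x) → c y^{−α/(1+κ)}` with `F̄` regularly
varying of index `−α` and `b` regularly varying of index `κ ≥ 0`, then
`x ↦ P(|X₀X_h| > x)` is regularly varying of index `−α/(1+κ)`. -/
theorem stmt16 {Ω : Type*} [MeasurableSpace Ω] (μ : Measure Ω) [IsProbabilityMeasure μ]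
    (α κ c : ℝ) (hα : 0 < α) (hκ : 0 ≤ κ) (hc : 0 < c)
    (Fbar b : ℝ → ℝ) (hmF : Measurable Fbar) (hmb : Measurable b)
    (hFrv : RegVarying Fbar (-α)) (hbrv : RegVarying b κ)
    (hFpos : ∀ᶠ x in atTop, 0 < Fbar x) (hbpos : ∀ᶠ x in atTop, 0 < b x)
    (X0 Xh : Ω → ℝ) (hmX0 : Measurable X0) (hmXh : Measurable Xh)
    (G : ℝ → ℝ) (hG : ∀ x, G x = (μ {ω | x < |X0 ω * Xh ω|}).toReal)
    (hlim : ∀ y : ℝ, 0 < y →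
      Tendsto (fun x => G (x * b x * y) / Fbar x) atTop (nhds (c * y ^ (-α / (1 + κ))))) :
    RegVarying G (-α / (1 + κ)) := by
  have hκ1 : (0:ℝ) < 1 + κ := by linarith
  set ρ : ℝ := -α / (1 + κ) with hρ_def
  have hρ_neg : ρ < 0 := div_neg_of_neg_of_pos (by linarith) hκ1
  have hρ_ne : ρ ≠ 0 := ne_of_lt hρ_neg
  have hρinv : ρ⁻¹ < 0 := inv_lt_zero.mpr hρ_neg
  have hGanti : Antitone G := by
    intro x y hxy
    rw [hG, hG]
    exact ENNReal.toReal_mono (measure_ne_top μ _)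
      (measure_mono fun ω hω => lt_of_le_of_lt hxy hω)
  intro t ht
  have htρ : 0 < t ^ ρ := Real.rpow_pos_of_pos ht ρ
  rw [tendsto_order]
  constructor
  · -- lower bound: ∀ a < t ^ ρ, eventually a < G (t * u) / G u
    intro a ha
    set a' : ℝ := max a (t ^ ρ / 2) with ha'_def
    have ha'1 : a ≤ a' := le_max_left _ _
    have ha'pos : 0 < a' := lt_of_lt_of_le (half_pos htρ) (le_max_right _ _)
    have ha'half : t ^ ρ / 2 ≤ a' := le_max_right _ _
    have ha'lt : a' < t ^ ρ := max_lt ha (by linarith)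
    set m : ℝ := (a' / t ^ ρ + 1) / 2 with hm_def
    have hq0 : 0 < a' / t ^ ρ := div_pos ha'pos htρ
    have hq1 : a' / t ^ ρ < 1 := (div_lt_one htρ).mpr ha'lt
    have hm0 : 0 < m := by rw [hm_def]; linarith
    have hm1 : m < 1 := by rw [hm_def]; linarith
    have hm_gt : a' / t ^ ρ < m := by rw [hm_def]; linarith
    have hX : a' < t ^ ρ * m := by
      have := (div_lt_iff₀ htρ).mp hm_gt
      linarith
    set M' : ℝ := m ^ ρ⁻¹ with hM'_def
    have hM'1 : 1 < M' := by
      rw [hM'_def, Real.one_lt_rpow_iff_of_pos hm0]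
      exact Or.inr ⟨hm1, hρinv⟩
    have hM'pos : 0 < M' := lt_trans one_pos hM'1
    have hM'ρ : M' ^ ρ = m := by
      rw [hM'_def, ← Real.rpow_mul hm0.le, inv_mul_cancel₀ hρ_ne, Real.rpow_one]
    have htM' : (t * M') ^ ρ = t ^ ρ * m := by
      rw [Real.mul_rpow ht.le hM'pos.le, hM'ρ]
    set ε' : ℝ := c * (t ^ ρ * m - a') / (2 * (1 + a')) with hε'_def
    have hε'pos : 0 < ε' := by
      rw [hε'_def]
      have hd : 0 < t ^ ρ * m - a' := by linarith
      positivity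
    have hkey : c * (t ^ ρ * m - a') = 2 * (1 + a') * ε' := by
      rw [hε'_def]; field_simp
    have hεm : ε' < c * m := by
      have h2a : t ^ ρ ≤ 2 * a' := by linarith
      have h2 : t ^ ρ * m ≤ 2 * a' * m := mul_le_mul_of_nonneg_right h2a hm0.le
      have hd : (0:ℝ) < 2 * (1 + a') := by linarith
      have h1 : 2 * (1 + a') * ε' < 2 * (1 + a') * (c * m) := by
        rw [← hkey]
        linarith [mul_le_mul_of_nonneg_left h2 hc.le, mul_pos hc ha'pos, mul_pos hc hm0]
      exact lt_of_mul_lt_mul_left h1 hd.le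
    filter_upwards [helper16 b Fbar G c ρ κ hκ hbrv hbpos hFpos hlim t M' ε' ht hM'1 hε'pos]
      with u hu
    obtain ⟨v, F, hF, hv, hvu, huv, h5, h6, h7, h8⟩ := hu
    have hGu_le : G u ≤ G v := hGanti hvu
    have hGuM : G (v * M') ≤ G u := hGanti huv
    have hGu_pos : 0 < G u := by
      have hp : 0 < (c * M' ^ ρ - ε') * F := by
        rw [hM'ρ]
        have hcm : 0 < c * m - ε' := by linarith
        positivity
      linarith
    rw [lt_div_iff₀ hGu_pos]
    have hGtu : G (v * (t * M')) ≤ G (t * u) := by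
      apply hGanti
      have h := mul_le_mul_of_nonneg_left huv ht.le
      have h2 : t * (v * M') = v * (t * M') := by ring
      linarith
    rw [htM'] at h7
    have hG8 : G u < (c + ε') * F := lt_of_le_of_lt hGu_le h8
    have hmain : a' * (c + ε') < c * (t ^ ρ * m) - ε' := by
      linarith [hkey, mul_pos ha'pos hε'pos]
    calc a * G u ≤ a' * G u := mul_le_mul_of_nonneg_right ha'1 hGu_pos.le
      _ < a' * ((c + ε') * F) := mul_lt_mul_of_pos_left hG8 ha'pos
      _ < (c * (t ^ ρ * m) - ε') * F := by
          rw [← mul_assoc]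
          exact mul_lt_mul_of_pos_right hmain hF
      _ ≤ G (v * (t * M')) := h7.le
      _ ≤ G (t * u) := hGtu
  · -- upper bound: ∀ w > t ^ ρ, eventually G (t * u) / G u < w
    intro w hw
    have hw0 : 0 < w := lt_trans htρ hw
    set m : ℝ := (t ^ ρ / w + 1) / 2 with hm_def
    have hq0 : 0 < t ^ ρ / w := div_pos htρ hw0
    have hq1 : t ^ ρ / w < 1 := (div_lt_one hw0).mpr hw
    have hm0 : 0 < m := by rw [hm_def]; linarith
    have hm1 : m < 1 := by rw [hm_def]; linarith
    have hm_gt : t ^ ρ / w < m := by rw [hm_def]; linarith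
    have hX : t ^ ρ < w * m := by
      have := (div_lt_iff₀ hw0).mp hm_gt
      linarith
    set M' : ℝ := m ^ ρ⁻¹ with hM'_def
    have hM'1 : 1 < M' := by
      rw [hM'_def, Real.one_lt_rpow_iff_of_pos hm0]
      exact Or.inr ⟨hm1, hρinv⟩
    have hM'pos : 0 < M' := lt_trans one_pos hM'1
    have hM'ρ : M' ^ ρ = m := by
      rw [hM'_def, ← Real.rpow_mul hm0.le, inv_mul_cancel₀ hρ_ne, Real.rpow_one]
    set ε' : ℝ := c * (w * m - t ^ ρ) / (2 * (1 + w)) with hε'_def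
    have hε'pos : 0 < ε' := by
      rw [hε'_def]
      have hd : 0 < w * m - t ^ ρ := by linarith
      positivity
    have hkey : c * (w * m - t ^ ρ) = 2 * (1 + w) * ε' := by
      rw [hε'_def]; field_simp
    have hεm : ε' < c * m := by
      have hd : (0:ℝ) < 2 * (1 + w) := by linarith
      have h1 : 2 * (1 + w) * ε' < 2 * (1 + w) * (c * m) := by
        rw [← hkey]
        linarith [mul_pos hc htρ, mul_pos hc hm0, mul_pos (mul_pos hc hw0) hm0]
      exact lt_of_mul_lt_mul_left h1 hd.le
    filter_upwards [helper16 b Fbar G c ρ κ hκ hbrv hbpos hFpos hlim t M' ε' ht hM'1 hε'pos]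
      with u hu
    obtain ⟨v, F, hF, hv, hvu, huv, h5, h6, h7, h8⟩ := hu
    rw [hM'ρ] at h6
    have hGuM : G (v * M') ≤ G u := hGanti huv
    have hGu_pos : 0 < G u := by
      have hp : 0 < (c * m - ε') * F := by
        have hcm : 0 < c * m - ε' := by linarith
        positivity
      linarith
    rw [div_lt_iff₀ hGu_pos]
    have hGtu : G (t * u) ≤ G (v * t) := by
      apply hGanti
      have h := mul_le_mul_of_nonneg_left hvu ht.le
      have h2 : t * v = v * t := by ring
      linarith
    have hmain : c * t ^ ρ + ε' < w * (c * m - ε') := by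
      linarith [hkey, mul_pos hw0 hε'pos]
    calc G (t * u) ≤ G (v * t) := hGtu
      _ < (c * t ^ ρ + ε') * F := h5
      _ < w * ((c * m - ε') * F) := by
          rw [← mul_assoc]
          exact mul_lt_mul_of_pos_right hmain hF
      _ ≤ w * G (v * M') := mul_le_mul_of_nonneg_left h6.le hw0.le
      _ ≤ w * G u := mul_le_mul_of_nonneg_left hGuM hw0.le
end
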